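/- Every root function 𝒵 with support Ψ arises from a coset of an admissible subgroup: there exist x ∈ Ω(Ψ) and an admissible subgroup X of Ω(Ψ) such that Z_α = x(α) + X(α) := {x(α) + f(α) | f ∈ X} for all α ∈ Ψ. -/

import Mathlib

open Module Submodule

variable {V : Type*}

/-- For `A, B ⊆ ℤ` and `c : ℤ`, the set `A - c·B = {a - c*b | a ∈ A, b ∈ B}`. -/
def zdiff (A : Set ℤ) (c : ℤ) (B : Set ℤ) : Set ℤ := {z | ∃ a ∈ A, ∃ b ∈ B, z = a - c * b}

/-- The set `n·ℤ` of integer multiples of `n`. -/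
def zmul (n : ℤ) : Set ℤ := {z | ∃ k : ℤ, z = n * k}

/-- Minkowski sum of two sets of integers. -/
def msum (A B : Set ℤ) : Set ℤ := {z | ∃ a ∈ A, ∃ b ∈ B, z = a + b}

section
variable [AddCommGroup V] [Module ℝ V]

/-- `Ψ` is a root subsystem of `Φ` (with coroot assignment `cv`):
`Ψ ⊆ Φ` and `s_α(β) = β - ⟨β,α∨⟩•α ∈ Ψ` for all `α, β ∈ Ψ`. -/
def IsRootSubsystem (Φ : Set V) (cv : V → Module.Dual ℝ V) (Ψ : Set V) : Prop :=
  Ψ ⊆ Φ ∧ ∀ α ∈ Ψ, ∀ β ∈ Ψ, β - cv α β • α ∈ Ψ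

/-- `Z : V → Set ℤ` is a root function for `Φ`:
`Z β - ⟨β,α∨⟩·Z α ⊆ Z (s_α β)` for all `α, β ∈ Φ`.
Here `pairInt β α` is the integer `⟨β, α∨⟩`. -/
def IsRootFunction (Φ : Set V) (cv : V → Module.Dual ℝ V) (pairInt : V → V → ℤ)
    (Z : V → Set ℤ) : Prop :=
  ∀ α ∈ Φ, ∀ β ∈ Φ, zdiff (Z β) (pairInt β α) (Z α) ⊆ Z (β - cv α β • α)

/-- `S` is a root subsystem of the loop extension `Φ × ℤ`:
`S ⊆ Φ × ℤ` and `S` is closed under the reflections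
`ŝ_(α,m) (β,n) = (s_α β, n - m·⟨β,α∨⟩)`. -/
def IsLoopSubsystem (Φ : Set V) (cv : V → Module.Dual ℝ V) (pairInt : V → V → ℤ)
    (S : Set (V × ℤ)) : Prop :=
  (∀ p ∈ S, p.1 ∈ Φ) ∧
  ∀ p ∈ S, ∀ q ∈ S, (q.1 - cv p.1 q.1 • p.1, q.2 - p.2 * pairInt q.1 p.1) ∈ S

/-- The group `W_Ψ` of linear automorphisms of `V` generated by the reflections
`s_α : v ↦ v - ⟨v,α∨⟩•α` for `α ∈ Ψ`. -/
def WGroup (cv : V → Module.Dual ℝ V) (Ψ : Set V) (h2 : ∀ α ∈ Ψ, cv α α = 2) :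
    Subgroup (V ≃ₗ[ℝ] V) :=
  Subgroup.closure {w | ∃ α, ∃ hα : α ∈ Ψ, w = Module.reflection (h2 α hα)}

/-- `X(α) = {f(α) | f ∈ X}` for a set `X` of coweights (elements of `Ω(Ψ) = Hom_ℤ(ℤΨ, ℤ)`,
where `ℤΨ = span ℤ Γ`). -/
def Xval (Γ : Set V) (X : Set (span ℤ (Γ : Set V) →ₗ[ℤ] ℤ)) {α : V}
    (h : α ∈ span ℤ Γ) : Set ℤ :=
  {z | ∃ f ∈ X, f ⟨α, h⟩ = z}

/-- `X` is an admissible subgroup of the coweight lattice `Ω(Ψ) = Hom_ℤ(ℤΨ, ℤ)`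
(`ℤΨ = span ℤ Γ`): there is `N : Ψ → ℕ` with `n_β ∣ ⟨β,α∨⟩·n_α` for all `α, β ∈ Ψ` and
`n_{w(α)} = n_α` for all `α ∈ Ψ`, `w ∈ W_Ψ`, such that
`X = {f ∈ Ω(Ψ) | f(α) ∈ n_α·ℤ for all α ∈ Ψ}`. -/
def IsAdmissibleSubgroup (cv : V → Module.Dual ℝ V) (pairInt : V → V → ℤ)
    (Γ Ψ : Set V) (h2Ψ : ∀ α ∈ Ψ, cv α α = 2) (hspan : ∀ α ∈ Ψ, α ∈ span ℤ Γ)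
    (X : AddSubgroup (span ℤ (Γ : Set V) →ₗ[ℤ] ℤ)) : Prop :=
  ∃ N : V → ℕ,
    (∀ α ∈ Ψ, ∀ β ∈ Ψ, (N β : ℤ) ∣ pairInt β α * N α) ∧
    (∀ α ∈ Ψ, ∀ w ∈ WGroup cv Ψ h2Ψ, N (w α) = N α) ∧
    ((X : Set (span ℤ (Γ : Set V) →ₗ[ℤ] ℤ)) =
      {f | ∀ α, ∀ hα : α ∈ Ψ, (N α : ℤ) ∣ f ⟨α, hspan α hα⟩})

end

/- ## Auxiliary lemmas -/

lemma map_closure_mul2' (D : Set ℤ) :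
    AddSubgroup.closure ((2 * ·) '' D) = AddSubgroup.map (AddMonoidHom.mul 2) (AddSubgroup.closure D) := by
  rw [AddMonoidHom.map_closure]
  rfl

lemma int_coset (A : Set ℤ) (a₀ : ℤ) (h0 : a₀ ∈ A)
    (hstep : ∀ a ∈ A, ∀ b ∈ A, ∀ c ∈ A, a + 2*(b - c) ∈ A) :
    ∃ n : ℕ, A = {z | ∃ k : ℤ, z = a₀ + n * k} := by
  classical
  set D : Set ℤ := {d | ∃ a ∈ A, ∃ b ∈ A, d = a - b} with hD
  obtain ⟨g, hg⟩ := Int.subgroup_cyclic (AddSubgroup.closure D)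
  have hdiff : ∀ a ∈ A, ∃ k : ℤ, a = a₀ + g * k := by
    intro a ha
    have : a - a₀ ∈ AddSubgroup.closure D := AddSubgroup.subset_closure ⟨a, ha, a₀, h0, rfl⟩
    rw [hg, AddSubgroup.mem_closure_singleton] at this
    obtain ⟨k, hk⟩ := this
    rw [smul_eq_mul] at hk
    exact ⟨k, by linarith [hk, mul_comm k g]⟩
  have hH : ∀ h ∈ AddSubgroup.closure ((2 * ·) '' D), (∀ a ∈ A, a + h ∈ A) ∧ (∀ a ∈ A, a - h ∈ A) := by
    intro h hh
    induction hh using AddSubgroup.closure_induction with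
    | mem x hx =>
      obtain ⟨d, ⟨a, ha, b, hb, rfl⟩, rfl⟩ := hx
      constructor
      · intro c hc; simpa using hstep c hc a ha b hb
      · intro c hc; have := hstep c hc b hb a ha; convert this using 1; ring
    | zero => simp
    | add x y hx hy ihx ihy =>
      constructor
      · intro a ha; have := ihy.1 _ (ihx.1 a ha); convert this using 1; ring
      · intro a ha; have := ihy.2 _ (ihx.2 a ha); convert this using 1; ring
    | neg x hx ihx =>
      constructor
      · intro a ha; have e : a + -x = a - x := by ring
        rw [e]; exact ihx.2 a ha
      · intro a ha; have e : a - -x = a + x := by ring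
        rw [e]; exact ihx.1 a ha
  have h2g : (2*g) ∈ AddSubgroup.closure ((2 * ·) '' D) := by
    rw [map_closure_mul2']
    exact ⟨g, by rw [hg]; exact AddSubgroup.mem_closure_singleton.2 ⟨1, one_smul _ _⟩, rfl⟩
  have hAdd2g : ∀ a ∈ A, ∀ k : ℤ, a + 2*g*k ∈ A := by
    intro a ha k
    have hm : (k • (2*g)) ∈ AddSubgroup.closure ((2 * ·) '' D) := zsmul_mem h2g k
    have := (hH _ hm).1 a ha
    rw [smul_eq_mul] at this
    convert this using 1; ring
  by_cases hg0 : g = 0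
  · refine ⟨0, ?_⟩
    ext z
    simp only [Set.mem_setOf_eq]
    constructor
    · intro hz
      obtain ⟨k, hk⟩ := hdiff z hz
      exact ⟨0, by rw [hk, hg0]; push_cast; ring⟩
    · rintro ⟨k, rfl⟩; simpa using h0
  · have hAll : ∀ k : ℤ, a₀ + g * k ∈ A := by
      have hodd : ∃ j : ℤ, a₀ + g*(2*j+1) ∈ A := by
        by_contra hno
        push_neg at hno
        have hallEv : ∀ a ∈ A, ∃ k : ℤ, a = a₀ + g * (2 * k) := by
          intro a ha
          obtain ⟨k, hk⟩ := hdiff a ha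
          rcases Int.even_or_odd k with ⟨m, hm⟩ | ⟨m, hm⟩
          · exact ⟨m, by rw [hk, hm]; ring⟩
          · exfalso
            apply hno m
            have e : a₀ + g * (2*m+1) = a := by rw [hk, hm]
            rw [e]; exact ha
        have hDsub : D ⊆ (AddSubgroup.zmultiples (2*g) : Set ℤ) := by
          rintro d ⟨a, ha, b, hb, rfl⟩
          obtain ⟨ka, hka⟩ := hallEv a ha
          obtain ⟨kb, hkb⟩ := hallEv b hb
          refine ⟨ka - kb, ?_⟩
          show (ka - kb) • (2*g) = a - b
          rw [smul_eq_mul, hka, hkb]; ring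
        have hle : AddSubgroup.closure D ≤ AddSubgroup.zmultiples (2*g) := by
          rw [AddSubgroup.closure_le]; exact hDsub
        have hgin : g ∈ AddSubgroup.closure D := by
          rw [hg]; exact AddSubgroup.subset_closure rfl
        obtain ⟨m, hm⟩ := hle hgin
        simp only [smul_eq_mul] at hm
        have : g * (2 * m - 1) = 0 := by linear_combination hm
        rcases mul_eq_zero.1 this with h | h
        · exact hg0 h
        · omega
      obtain ⟨j, hj⟩ := hodd
      intro k
      rcases Int.even_or_odd k with ⟨m, hm⟩ | ⟨m, hm⟩
      · have := hAdd2g a₀ h0 m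
        convert this using 1; rw [hm]; ring
      · have := hAdd2g _ hj (m - j)
        convert this using 1; rw [hm]; ring
    refine ⟨g.natAbs, ?_⟩
    ext z
    simp only [Set.mem_setOf_eq]
    constructor
    · intro hz
      obtain ⟨k, hk⟩ := hdiff z hz
      rcases Int.natAbs_eq g with h | h
      · exact ⟨k, by rw [hk, ← h]⟩
      · refine ⟨-k, ?_⟩
        have e : (g.natAbs : ℤ) = -g := by linarith [h]
        rw [hk, e]; ring
    · rintro ⟨k, rfl⟩
      rcases Int.natAbs_eq g with h | h
      · have e : a₀ + (g.natAbs:ℤ) * k = a₀ + g * k := by rw [← h]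
        rw [e]; exact hAll k
      · have e : (g.natAbs : ℤ) = -g := by linarith [h]
        have e2 : a₀ + (g.natAbs:ℤ) * k = a₀ + g * (-k) := by rw [e]; ring
        rw [e2]; exact hAll (-k)

lemma coset_sub_dvd {p q m m' : ℤ}
    (hsub : {z : ℤ | ∃ k, z = p + m*k} ⊆ {z | ∃ k, z = q + m'*k}) :
    m' ∣ m ∧ m' ∣ (p - q) := by
  have h0 : p ∈ {z : ℤ | ∃ k, z = p + m*k} := ⟨0, by ring⟩
  have h1 : p + m ∈ {z : ℤ | ∃ k, z = p + m*k} := ⟨1, by ring⟩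
  obtain ⟨k0, hk0⟩ := hsub h0
  obtain ⟨k1, hk1⟩ := hsub h1
  constructor
  · exact ⟨k1 - k0, by linear_combination hk1 - hk0⟩
  · exact ⟨k0, by linear_combination hk0⟩

variable [AddCommGroup V] [Module ℝ V]

theorem stmt14
    (Φ : Set V) (cv : V → Module.Dual ℝ V) (pairInt : V → V → ℤ)
    (hne : ∀ α ∈ Φ, α ≠ 0)
    (h2 : ∀ α ∈ Φ, cv α α = 2)
    (hpair : ∀ α ∈ Φ, ∀ β ∈ Φ, (pairInt β α : ℝ) = cv α β)
    (hrefl : ∀ α ∈ Φ, (fun β => β - cv α β • α) '' Φ = Φ)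
    (Γ Ψ : Set V) (hΓΦ : Γ ⊆ Φ)
    (hli : LinearIndependent ℝ (fun γ : Γ => (γ : V)))
    (hΨΦ : Ψ ⊆ Φ) (hΨcl : ∀ α ∈ Ψ, ∀ β ∈ Ψ, β - cv α β • α ∈ Ψ)
    (hΓΨ : Γ ⊆ Ψ)
    (hmin : ∀ Ψ', IsRootSubsystem Φ cv Ψ' → Γ ⊆ Ψ' → Ψ ⊆ Ψ')
    (hspan : ∀ α ∈ Ψ, α ∈ span ℤ Γ)
    (Z : V → Set ℤ) (hZ : IsRootFunction Φ cv pairInt Z)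
    (hsupp : {α ∈ Φ | Z α ≠ ∅} = Ψ) :
    ∃ x : span ℤ Γ →ₗ[ℤ] ℤ, ∃ X : AddSubgroup (span ℤ Γ →ₗ[ℤ] ℤ),
      IsAdmissibleSubgroup cv pairInt Γ Ψ (fun α hα => h2 α (hΨΦ hα)) hspan X ∧
      ∀ α, ∀ hα : α ∈ Ψ,
        Z α = {z : ℤ | ∃ f ∈ X, z = x ⟨α, hspan α hα⟩ + f ⟨α, hspan α hα⟩} := by
  classical
  -- nonemptiness of Z on Ψ
  have hZne : ∀ α ∈ Ψ, (Z α).Nonempty := by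
    intro α hα
    rw [← hsupp] at hα
    exact Set.nonempty_iff_ne_empty.2 hα.2
  -- pairInt α α = 2
  have hpair2 : ∀ α ∈ Φ, pairInt α α = 2 := by
    intro α hα
    have h1 := hpair α hα α hα
    rw [h2 α hα] at h1
    exact_mod_cast h1
  -- Φ is closed under reflections
  have hsmem : ∀ α ∈ Φ, ∀ β ∈ Φ, β - cv α β • α ∈ Φ := by
    intro α hα β hβ
    rw [← hrefl α hα]
    exact ⟨β, hβ, rfl⟩
  -- -α ∈ Φ
  have hself : ∀ α : V, ∀ hα : α ∈ Φ, α - cv α α • α = -α := by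
    intro α hα
    rw [h2 α hα, two_smul]
    abel
  have hnegΦ : ∀ α ∈ Φ, -α ∈ Φ := by
    intro α hα
    have := hsmem α hα α hα
    rwa [hself α hα] at this
  -- pairInt (-α) α = -2
  have hpairneg : ∀ α ∈ Φ, pairInt (-α) α = -2 := by
    intro α hα
    have h1 := hpair α hα (-α) (hnegΦ α hα)
    rw [map_neg, h2 α hα] at h1
    exact_mod_cast h1
  -- closure of Z α under a + 2(b - c)
  have hZstep : ∀ α ∈ Ψ, ∀ a ∈ Z α, ∀ b ∈ Z α, ∀ c ∈ Z α, a + 2*(b - c) ∈ Z α := by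
    intro α hα a ha b hb c hc
    have hαΦ := hΨΦ hα
    have hnΦ := hnegΦ α hαΦ
    have key1 : ∀ u ∈ Z α, ∀ v ∈ Z α, u - 2*v ∈ Z (-α) := by
      intro u hu v hv
      have hm : u - 2*v ∈ zdiff (Z α) (pairInt α α) (Z α) :=
        ⟨u, hu, v, hv, by rw [hpair2 α hαΦ]⟩
      have := hZ α hαΦ α hαΦ hm
      rwa [hself α hαΦ] at this
    have key2 : ∀ u ∈ Z (-α), ∀ v ∈ Z α, u + 2*v ∈ Z α := by
      intro u hu v hv
      have hm : u + 2*v ∈ zdiff (Z (-α)) (pairInt (-α) α) (Z α) :=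
        ⟨u, hu, v, hv, by rw [hpairneg α hαΦ]; ring⟩
      have := hZ α hαΦ (-α) hnΦ hm
      have hidx : -α - cv α (-α) • α = α := by
        rw [map_neg, h2 α hαΦ, neg_smul, two_smul]
        abel
      rwa [hidx] at this
    have h1 := key1 a ha c hc
    have h2' := key2 _ h1 b hb
    convert h2' using 1
    ring
  -- the integral basis B of span ℤ Γ given by Γ
  have hinj : Function.Injective (fun r : ℤ => r • (1:ℝ)) := by
    intro a b h
    simp only [zsmul_eq_mul, mul_one] at h
    exact_mod_cast h
  have hliZ : LinearIndependent ℤ (fun γ : Γ => (γ : V)) := hli.restrict_scalars hinj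
  have hrange : Set.range (fun γ : Γ => (γ : V)) = Γ := Subtype.range_coe
  set B : Basis Γ ℤ (span ℤ (Γ : Set V)) :=
    (Basis.span hliZ).map (LinearEquiv.ofEq _ _ (by rw [hrange])) with hBdef
  have hB : ∀ γ : Γ, (B γ : V) = (γ : V) := by
    intro γ
    rw [hBdef, Basis.map_apply, LinearEquiv.coe_ofEq_apply, Basis.span_apply]
  have hBmk : ∀ (γ : V) (hγ : γ ∈ Γ) (h : γ ∈ span ℤ (Γ : Set V)),
      (⟨γ, h⟩ : span ℤ (Γ : Set V)) = B ⟨γ, hγ⟩ := by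
    intro γ hγ h
    exact Subtype.ext (hB ⟨γ, hγ⟩).symm
  -- induction principle over Ψ
  have ind : ∀ (P : V → Prop), (∀ γ ∈ Γ, P γ) →
      (∀ α ∈ Ψ, ∀ β ∈ Ψ, P α → P β → P (β - cv α β • α)) → ∀ α ∈ Ψ, P α := by
    intro P hbase hstepP
    have hrs : IsRootSubsystem Φ cv {α ∈ Ψ | P α} :=
      ⟨fun α hα => hΨΦ hα.1,
       fun α hα β hβ => ⟨hΨcl α hα.1 β hβ.1, hstepP α hα.1 β hβ.1 hα.2 hβ.2⟩⟩
    have hsub := hmin _ hrs (fun γ hγ => ⟨hΓΨ hγ, hbase γ hγ⟩)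
    exact fun α hα => (hsub hα).2
  -- the reflection identity inside the submodule
  have hsub_eq : ∀ α (hαΨ : α ∈ Ψ) β (hβΨ : β ∈ Ψ),
      (⟨β - cv α β • α, hspan _ (hΨcl α hαΨ β hβΨ)⟩ : span ℤ (Γ : Set V)) =
        ⟨β, hspan β hβΨ⟩ - (pairInt β α) • ⟨α, hspan α hαΨ⟩ := by
    intro α hαΨ β hβΨ
    apply Subtype.ext
    have hc : ((⟨β, hspan β hβΨ⟩ - (pairInt β α) • ⟨α, hspan α hαΨ⟩ : span ℤ (Γ : Set V)) : V)
        = β - (pairInt β α) • α := by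
      push_cast
      rfl
    rw [hc]
    show β - cv α β • α = β - (pairInt β α) • α
    rw [← Int.cast_smul_eq_zsmul ℝ, hpair α (hΨΦ hαΨ) β (hΨΦ hβΨ)]
  -- the base point x
  set x : span ℤ (Γ : Set V) →ₗ[ℤ] ℤ :=
    B.constr ℤ (fun γ : Γ => (hZne (γ : V) (hΓΨ γ.2)).choose) with hxdef
  have hxγ : ∀ γ : Γ, x (B γ) ∈ Z (γ : V) := by
    intro γ
    rw [hxdef, Basis.constr_basis]
    exact (hZne (γ : V) (hΓΨ γ.2)).choose_spec
  -- x(α) ∈ Z α for all α ∈ Ψ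
  have hx_mem : ∀ α ∈ Ψ, ∀ h' : α ∈ span ℤ (Γ : Set V), x ⟨α, h'⟩ ∈ Z α := by
    refine ind (fun α => ∀ h' : α ∈ span ℤ (Γ : Set V), x ⟨α, h'⟩ ∈ Z α) ?_ ?_
    · intro γ hγ h'
      rw [hBmk γ hγ h']
      exact hxγ ⟨γ, hγ⟩
    · intro α hα β hβ ihα ihβ h'
      have he : (⟨β - cv α β • α, h'⟩ : span ℤ (Γ : Set V)) =
          ⟨β, hspan β hβ⟩ - (pairInt β α) • ⟨α, hspan α hα⟩ := hsub_eq α hα β hβ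
      rw [he, map_sub, map_smul, smul_eq_mul]
      exact hZ α (hΨΦ hα) β (hΨΦ hβ)
        ⟨x ⟨β, hspan β hβ⟩, ihβ _, x ⟨α, hspan α hα⟩, ihα _, rfl⟩
  -- each Z α is a coset
  have hcoset : ∀ α, ∀ hα : α ∈ Ψ,
      ∃ n : ℕ, Z α = {z | ∃ k : ℤ, z = x ⟨α, hspan α hα⟩ + n * k} := by
    intro α hα
    exact int_coset (Z α) _ (hx_mem α hα (hspan α hα)) (hZstep α hα)
  set N : V → ℕ := fun α => if hα : α ∈ Ψ then (hcoset α hα).choose else 0 with hNdef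
  have hN : ∀ α, ∀ hα : α ∈ Ψ,
      Z α = {z | ∃ k : ℤ, z = x ⟨α, hspan α hα⟩ + (N α) * k} := by
    intro α hα
    have : N α = (hcoset α hα).choose := by rw [hNdef]; exact dif_pos hα
    rw [this]
    exact (hcoset α hα).choose_spec
  -- cv α σ = -(cv α β)
  have hcvσ : ∀ α ∈ Φ, ∀ β, cv α (β - cv α β • α) = -(cv α β) := by
    intro α hα β
    rw [map_sub, map_smul, smul_eq_mul, h2 α hα]
    ring
  -- s_α σ = β
  have hss : ∀ α ∈ Φ, ∀ β,
      (β - cv α β • α) - cv α (β - cv α β • α) • α = β := by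
    intro α hα β
    rw [hcvσ α hα β, neg_smul, sub_neg_eq_add, sub_add_cancel]
  -- pairInt σ α = -(pairInt β α)
  have hpairσ : ∀ α ∈ Ψ, ∀ β ∈ Ψ, pairInt (β - cv α β • α) α = -(pairInt β α) := by
    intro α hα β hβ
    have hσΦ : β - cv α β • α ∈ Φ := hΨΦ (hΨcl α hα β hβ)
    have h1 := hpair α (hΨΦ hα) _ hσΦ
    rw [hcvσ α (hΨΦ hα) β] at h1
    have h2' : (pairInt (β - cv α β • α) α : ℝ) = ((-(pairInt β α) : ℤ) : ℝ) := by
      rw [h1, ← hpair α (hΨΦ hα) β (hΨΦ hβ)]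
      push_cast
      ring
    exact_mod_cast h2'
  -- x(σ) = x(β) - c·x(α)
  have hxσ : ∀ α, ∀ hα : α ∈ Ψ, ∀ β, ∀ hβ : β ∈ Ψ,
      x ⟨β - cv α β • α, hspan _ (hΨcl α hα β hβ)⟩ =
        x ⟨β, hspan β hβ⟩ - (pairInt β α) * x ⟨α, hspan α hα⟩ := by
    intro α hα β hβ
    rw [hsub_eq α hα β hβ, map_sub, map_smul, smul_eq_mul]
  -- key divisibility facts
  have hNkey : ∀ α, ∀ hα : α ∈ Ψ, ∀ β, ∀ hβ : β ∈ Ψ,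
      ((N (β - cv α β • α) : ℤ) ∣ (N β : ℤ)) ∧
      ((N (β - cv α β • α) : ℤ) ∣ pairInt β α * (N α : ℤ)) := by
    intro α hα β hβ
    have hσ : β - cv α β • α ∈ Ψ := hΨcl α hα β hβ
    have hsub1 : ∀ m : ℤ, ({z : ℤ | ∃ a ∈ Z β, ∃ b ∈ Z α, z = a - pairInt β α * b} ⊆
        Z (β - cv α β • α)) := fun _ => hZ α (hΨΦ hα) β (hΨΦ hβ)
    -- first: N σ ∣ N β
    have d1 : {z : ℤ | ∃ k : ℤ, z = x ⟨β - cv α β • α, hspan _ hσ⟩ + (N β : ℤ) * k} ⊆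
        {z : ℤ | ∃ k : ℤ, z = x ⟨β - cv α β • α, hspan _ hσ⟩ + (N (β - cv α β • α) : ℤ) * k} := by
      rintro z ⟨k, rfl⟩
      rw [← hN _ hσ]
      apply hZ α (hΨΦ hα) β (hΨΦ hβ)
      refine ⟨x ⟨β, hspan β hβ⟩ + (N β : ℤ) * k, ?_, x ⟨α, hspan α hα⟩, hx_mem α hα _, ?_⟩
      · rw [hN β hβ]; exact ⟨k, rfl⟩
      · rw [hxσ α hα β hβ]; ring
    have d2 : {z : ℤ | ∃ k : ℤ, z = x ⟨β - cv α β • α, hspan _ hσ⟩ + (-(pairInt β α * (N α : ℤ))) * k} ⊆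
        {z : ℤ | ∃ k : ℤ, z = x ⟨β - cv α β • α, hspan _ hσ⟩ + (N (β - cv α β • α) : ℤ) * k} := by
      rintro z ⟨k, rfl⟩
      rw [← hN _ hσ]
      apply hZ α (hΨΦ hα) β (hΨΦ hβ)
      refine ⟨x ⟨β, hspan β hβ⟩, hx_mem β hβ _, x ⟨α, hspan α hα⟩ + (N α : ℤ) * k, ?_, ?_⟩
      · rw [hN α hα]; exact ⟨k, rfl⟩
      · rw [hxσ α hα β hβ]; ring
    refine ⟨(coset_sub_dvd d1).1, ?_⟩
    have := (coset_sub_dvd d2).1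
    rwa [dvd_neg] at this
  -- N is invariant under reflections
  have hNeq : ∀ α, ∀ hα : α ∈ Ψ, ∀ β, ∀ hβ : β ∈ Ψ, N (β - cv α β • α) = N β := by
    intro α hα β hβ
    have hσ : β - cv α β • α ∈ Ψ := hΨcl α hα β hβ
    have d1 := (hNkey α hα β hβ).1
    have d2 := (hNkey α hα _ hσ).1
    rw [hss α (hΨΦ hα) β] at d2
    exact Nat.dvd_antisymm (Int.ofNat_dvd.mp d1) (Int.ofNat_dvd.mp d2)
  -- main divisibility
  have hNdvd : ∀ α ∈ Ψ, ∀ β ∈ Ψ, (N β : ℤ) ∣ pairInt β α * (N α : ℤ) := by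
    intro α hα β hβ
    have := (hNkey α hα β hβ).2
    rwa [hNeq α hα β hβ] at this
  -- The admissible subgroup X
  set X : AddSubgroup (span ℤ (Γ : Set V) →ₗ[ℤ] ℤ) :=
    { carrier := {f | ∀ α, ∀ hα : α ∈ Ψ, (N α : ℤ) ∣ f ⟨α, hspan α hα⟩},
      add_mem' := by
        intro f g hf hg
        intro α hα
        rw [LinearMap.add_apply]
        exact dvd_add (hf α hα) (hg α hα)
      zero_mem' := by
        intro α hα
        simp
      neg_mem' := by
        intro f hf α hα
        rw [LinearMap.neg_apply]
        exact dvd_neg.mpr (hf α hα) } with hXdef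
  have hXmem : ∀ f : span ℤ (Γ : Set V) →ₗ[ℤ] ℤ,
      f ∈ X ↔ ∀ α, ∀ hα : α ∈ Ψ, (N α : ℤ) ∣ f ⟨α, hspan α hα⟩ := fun f => Iff.rfl
  -- the coweights N α · ⟨·, α∨⟩ belong to X
  have hcow : ∀ α, ∀ hα : α ∈ Ψ, ∃ g : span ℤ (Γ : Set V) →ₗ[ℤ] ℤ,
      g ∈ X ∧ ∀ β ∈ Φ, ∀ h' : β ∈ span ℤ (Γ : Set V),
        g ⟨β, h'⟩ = (N α : ℤ) * pairInt β α := by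
    intro α hα
    set g : span ℤ (Γ : Set V) →ₗ[ℤ] ℤ :=
      B.constr ℤ (fun γ : Γ => (N α : ℤ) * pairInt (γ : V) α) with hgdef
    have hval : ∀ v : V, ∀ h' : v ∈ span ℤ (Γ : Set V),
        ((g ⟨v, h'⟩ : ℤ) : ℝ) = (N α : ℤ) * cv α v := by
      intro v h'
      induction h' using Submodule.span_induction with
      | mem w hw =>
        rw [hBmk w hw _, hgdef, Basis.constr_basis]
        push_cast
        rw [hpair α (hΨΦ hα) w (hΓΦ hw)]
      | zero =>
        have e : (⟨(0:V), (span ℤ (Γ : Set V)).zero_mem⟩ : span ℤ (Γ : Set V)) = 0 := rfl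
        rw [e, map_zero, map_zero]
        push_cast
        ring
      | add w u hw hu ihw ihu =>
        have e : (⟨w + u, add_mem hw hu⟩ : span ℤ (Γ : Set V)) = ⟨w, hw⟩ + ⟨u, hu⟩ := rfl
        rw [e, map_add, map_add]
        push_cast
        rw [ihw, ihu]
        push_cast
        ring
      | smul a w hw ihw =>
        have e : (⟨a • w, smul_mem _ a hw⟩ : span ℤ (Γ : Set V)) = a • ⟨w, hw⟩ := rfl
        rw [e, map_smul, smul_eq_mul]
        have e2 : cv α (a • w) = (a : ℝ) * cv α w := by
          rw [← Int.cast_smul_eq_zsmul ℝ a w, map_smul, smul_eq_mul]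
        rw [e2]
        push_cast
        rw [ihw]
        push_cast
        ring
    have hvalΦ : ∀ β ∈ Φ, ∀ h' : β ∈ span ℤ (Γ : Set V),
        g ⟨β, h'⟩ = (N α : ℤ) * pairInt β α := by
      intro β hβ h'
      have h1 := hval β h'
      rw [← hpair α (hΨΦ hα) β hβ] at h1
      exact_mod_cast h1
    refine ⟨g, ?_, hvalΦ⟩
    intro β hβ
    rw [hvalΦ β (hΨΦ hβ) _]
    have := hNdvd α hα β hβ
    rwa [mul_comm] at this
  -- the rescaled dual basis coweights belong to X
  have hcoord : ∀ γ : Γ, ∀ β ∈ Ψ, ∀ h' : β ∈ span ℤ (Γ : Set V),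
      (N β : ℤ) ∣ (N (γ : V) : ℤ) * (B.repr ⟨β, h'⟩ γ) := by
    intro γ
    refine ind (fun β => ∀ h' : β ∈ span ℤ (Γ : Set V),
      (N β : ℤ) ∣ (N (γ : V) : ℤ) * (B.repr ⟨β, h'⟩ γ)) ?_ ?_
    · intro δ hδ h'
      rw [hBmk δ hδ h', Basis.repr_self, Finsupp.single_apply]
      by_cases hcase : (⟨δ, hδ⟩ : Γ) = γ
      · rw [if_pos hcase, mul_one, ← hcase]
      · rw [if_neg hcase, mul_zero]
        exact dvd_zero _
    · intro α hα β hβ ihα ihβ h'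
      have hσ : β - cv α β • α ∈ Ψ := hΨcl α hα β hβ
      have he : (⟨β - cv α β • α, h'⟩ : span ℤ (Γ : Set V)) =
          ⟨β, hspan β hβ⟩ - (pairInt β α) • ⟨α, hspan α hα⟩ := hsub_eq α hα β hβ
      rw [hNeq α hα β hβ, he, map_sub, map_smul, Finsupp.sub_apply, Finsupp.smul_apply,
        smul_eq_mul]
      have e : (N (γ:V) : ℤ) * (B.repr ⟨β, hspan β hβ⟩ γ - pairInt β α * B.repr ⟨α, hspan α hα⟩ γ)
          = (N (γ:V) : ℤ) * B.repr ⟨β, hspan β hβ⟩ γ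
            - pairInt β α * ((N (γ:V) : ℤ) * B.repr ⟨α, hspan α hα⟩ γ) := by ring
      rw [e]
      refine dvd_sub (ihβ _) ?_
      exact dvd_trans (hNdvd α hα β hβ) (mul_dvd_mul_left _ (ihα _))
  -- evaluation of X at α is all of N α · ℤ
  have hsurj : ∀ α ∈ Ψ, ∀ h' : α ∈ span ℤ (Γ : Set V),
      ∃ f, f ∈ X ∧ f ⟨α, h'⟩ = (N α : ℤ) := by
    refine ind (fun α => ∀ h' : α ∈ span ℤ (Γ : Set V),
      ∃ f, f ∈ X ∧ f ⟨α, h'⟩ = (N α : ℤ)) ?_ ?_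
    · intro γ hγ h'
      refine ⟨(N γ : ℤ) • B.coord ⟨γ, hγ⟩, ?_, ?_⟩
      · intro β hβ
        rw [LinearMap.smul_apply, smul_eq_mul, Basis.coord_apply]
        exact hcoord ⟨γ, hγ⟩ β hβ _
      · rw [LinearMap.smul_apply, smul_eq_mul, Basis.coord_apply, hBmk γ hγ h',
          Basis.repr_self, Finsupp.single_apply, if_pos rfl, mul_one]
    · intro α hα β hβ ihα ihβ h'
      have hσ : β - cv α β • α ∈ Ψ := hΨcl α hα β hβ
      obtain ⟨f, hfX, hfβ⟩ := ihβ (hspan β hβ)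
      obtain ⟨g, hgX, hgval⟩ := hcow α hα
      obtain ⟨s, hs⟩ := hfX α hα
      refine ⟨f - s • g, X.sub_mem hfX (X.zsmul_mem hgX s), ?_⟩
      have he : (⟨β - cv α β • α, h'⟩ : span ℤ (Γ : Set V)) =
          ⟨β, hspan β hβ⟩ - (pairInt β α) • ⟨α, hspan α hα⟩ := hsub_eq α hα β hβ
      have hgσ : g ⟨β - cv α β • α, h'⟩ = (N α : ℤ) * (-(pairInt β α)) := by
        rw [hgval _ (hΨΦ hσ) h', hpairσ α hα β hβ]
      have hfσ : f ⟨β - cv α β • α, h'⟩ = (N β : ℤ) - pairInt β α * ((N α : ℤ) * s) := by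
        rw [he, map_sub, map_smul, smul_eq_mul, hfβ, hs]
      rw [LinearMap.sub_apply, LinearMap.smul_apply, smul_eq_mul, hfσ, hgσ, hNeq α hα β hβ]
      ring
  -- W-invariance of N
  have hWinv : ∀ α ∈ Ψ, ∀ w ∈ WGroup cv Ψ (fun α hα => h2 α (hΨΦ hα)), N (w α) = N α := by
    have main : ∀ w ∈ WGroup cv Ψ (fun α hα => h2 α (hΨΦ hα)), ∀ α ∈ Ψ,
        (w α ∈ Ψ ∧ N (w α) = N α) ∧ (w.symm α ∈ Ψ ∧ N (w.symm α) = N α) := by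
      intro w hw
      induction hw using Subgroup.closure_induction with
      | mem u hu =>
        obtain ⟨δ, hδ, rfl⟩ := hu
        intro α hα
        have happ : ∀ v : V, (Module.reflection ((fun α hα => h2 α (hΨΦ hα)) δ hδ)) v
            = v - cv δ v • δ := fun v => Module.reflection_apply v _
        constructor
        · rw [happ α]
          exact ⟨hΨcl δ hδ α hα, hNeq δ hδ α hα⟩
        · rw [Module.reflection_symm, happ α]
          exact ⟨hΨcl δ hδ α hα, hNeq δ hδ α hα⟩
      | one =>
        intro α hα
        exact ⟨⟨hα, rfl⟩, ⟨hα, rfl⟩⟩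
      | mul u v hu hv ihu ihv =>
        intro α hα
        have h1 := ihv α hα
        have h2' := ihu _ h1.1.1
        have h3 := ihu α hα
        have h4 := ihv _ h3.2.1
        constructor
        · refine ⟨h2'.1.1, ?_⟩
          show N (u (v α)) = N α
          rw [h2'.1.2, h1.1.2]
        · refine ⟨h4.2.1, ?_⟩
          show N (v.symm (u.symm α)) = N α
          rw [h4.2.2, h3.2.2]
      | inv u hu ihu =>
        intro α hα
        exact ⟨(ihu α hα).2, (ihu α hα).1⟩
    intro α hα w hw
    exact ((main w hw α hα).1).2
  -- assemble
  refine ⟨x, X, ⟨N, hNdvd, hWinv, rfl⟩, ?_⟩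
  intro α hα
  ext z
  constructor
  · intro hz
    rw [hN α hα] at hz
    obtain ⟨k, rfl⟩ := hz
    obtain ⟨f0, hf0X, hf0v⟩ := hsurj α hα (hspan α hα)
    refine ⟨k • f0, X.zsmul_mem hf0X k, ?_⟩
    rw [LinearMap.smul_apply, smul_eq_mul, hf0v]
    ring
  · rintro ⟨f, hfX, rfl⟩
    rw [hN α hα]
    obtain ⟨k, hk⟩ := hfX α hα
    exact ⟨k, by rw [hk]⟩
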